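/- For the uniform distribution on {1,...,n}³ (n ≥ 3) as input to typeOf with the first coordinate secret, the leakage H(typeOf(H,L₁,L₂) | (L₁,L₂)) is strictly positive. -/

import Mathlib

open Finset Real

/-- Probability mass of the event `X = x` under distribution `p` on a finite sample space. -/
noncomputable def mass {Ω α : Type*} [Fintype Ω] [DecidableEq α]
    (p : Ω → ℝ) (X : Ω → α) (x : α) : ℝ :=
  ∑ ω ∈ Finset.univ.filter (fun ω => X ω = x), p ω

/-- Shannon entropy of a finitely supported random variable (convention `0 * log 0 = 0`
since `Real.log 0 = 0`). -/
noncomputable def entropy {Ω α : Type*} [Fintype Ω] [Fintype α] [DecidableEq α]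
    (p : Ω → ℝ) (X : Ω → α) : ℝ :=
  -∑ x, mass p X x * Real.log (mass p X x)

/-- Conditional Shannon entropy `H(X | L) = ∑ l p(l) H(X | L = l)`, written via the joint mass. -/
noncomputable def condEntropy {Ω α β : Type*} [Fintype Ω] [Fintype α] [Fintype β]
    [DecidableEq α] [DecidableEq β] (p : Ω → ℝ) (X : Ω → α) (L : Ω → β) : ℝ :=
  -∑ l, ∑ x, mass p (fun ω => (X ω, L ω)) (x, l) *
      Real.log (mass p (fun ω => (X ω, L ω)) (x, l) / mass p L l)

inductive TriType | EQUILATERAL | ISOSCELES | SCALENE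
deriving DecidableEq

instance instFintypeTriType : Fintype TriType where
  elems := {TriType.EQUILATERAL, TriType.ISOSCELES, TriType.SCALENE}
  complete := by intro x; cases x <;> simp

open TriType

def typeOf {α : Type*} [DecidableEq α] (h l1 l2 : α) : TriType :=
  if h = l1 ∧ l1 = l2 then EQUILATERAL
  else if h = l1 ∨ h = l2 ∨ l1 = l2 then ISOSCELES
  else SCALENE

lemma mass_const {Ω α : Type*} [Fintype Ω] [DecidableEq α]
    (c : ℝ) (X : Ω → α) (x : α) :
    mass (fun _ => c) X x = (Finset.univ.filter (fun ω => X ω = x)).card * c := by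
  simp [mass, Finset.sum_const, nsmul_eq_mul]

lemma mass_nonneg {Ω α : Type*} [Fintype Ω] [DecidableEq α]
    (p : Ω → ℝ) (hp : ∀ ω, 0 ≤ p ω) (X : Ω → α) (x : α) : 0 ≤ mass p X x :=
  Finset.sum_nonneg (fun ω _ => hp ω)

lemma mass_joint_le {Ω α β : Type*} [Fintype Ω] [DecidableEq α] [DecidableEq β]
    (p : Ω → ℝ) (hp : ∀ ω, 0 ≤ p ω) (X : Ω → α) (L : Ω → β) (x : α) (l : β) :
    mass p (fun ω => (X ω, L ω)) (x, l) ≤ mass p L l := by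
  apply Finset.sum_le_sum_of_subset_of_nonneg
  · intro ω hω
    simp only [Finset.mem_filter, Finset.mem_univ, true_and, Prod.mk.injEq] at hω ⊢
    exact hω.2
  · intro ω _ _; exact hp ω

/-- Under the uniform distribution on `(Fin n) × (Fin n) × (Fin n)` with `n ≥ 3`, the
triangle program (first coordinate secret) has strictly positive leakage. -/
theorem triangle_leakage_pos (n : ℕ) (hn : 3 ≤ n) :
    0 < condEntropy
        (fun _ : Fin n × Fin n × Fin n => (1 : ℝ) / (Fintype.card (Fin n × Fin n × Fin n)))
        (fun ω => typeOf ω.1 ω.2.1 ω.2.2)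
        (fun ω => ω.2) := by
  obtain ⟨m, rfl⟩ : ∃ m, n = m + 3 := ⟨n - 3, by omega⟩
  set n := m + 3
  set c : ℝ := (1 : ℝ) / (Fintype.card (Fin n × Fin n × Fin n)) with hc
  have hcard : (Fintype.card (Fin n × Fin n × Fin n) : ℝ) = (n : ℝ)^3 := by
    simp [Fintype.card_prod]; ring
  have hnpos : (0:ℝ) < (n:ℝ) := by positivity
  have hcpos : 0 < c := by
    rw [hc, hcard]; positivity
  set p : Fin n × Fin n × Fin n → ℝ := fun _ => c with hpdef
  set X : Fin n × Fin n × Fin n → TriType := fun ω => typeOf ω.1 ω.2.1 ω.2.2 with hX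
  set L : Fin n × Fin n × Fin n → Fin n × Fin n := fun ω => ω.2 with hL
  have hp : ∀ ω, 0 ≤ p ω := fun _ => hcpos.le
  -- each term is nonpositive
  have hterm : ∀ (l : Fin n × Fin n) (x : TriType),
      mass p (fun ω => (X ω, L ω)) (x, l) *
        Real.log (mass p (fun ω => (X ω, L ω)) (x, l) / mass p L l) ≤ 0 := by
    intro l x
    rcases eq_or_lt_of_le (mass_nonneg p hp (fun ω => (X ω, L ω)) (x, l)) with h0 | h0
    · rw [← h0]; simp
    · have hle := mass_joint_le p hp X L x l
      have hLpos : 0 < mass p L l := lt_of_lt_of_le h0 hle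
      have : mass p (fun ω => (X ω, L ω)) (x, l) / mass p L l ≤ 1 :=
        (div_le_one hLpos).2 hle
      have hlog : Real.log (mass p (fun ω => (X ω, L ω)) (x, l) / mass p L l) ≤ 0 :=
        Real.log_nonpos (by positivity) this
      exact mul_nonpos_of_nonneg_of_nonpos h0.le hlog
  -- the strictly negative term
  set l₀ : Fin n × Fin n := (0, 1) with hl0
  have h01 : (0 : Fin n) ≠ 1 := by
    simp [Fin.ext_iff, n]
  -- joint mass at (ISOSCELES, (0,1))
  have hfilt1 : Finset.univ.filter
      (fun ω : Fin n × Fin n × Fin n => ((X ω, L ω) = (ISOSCELES, l₀)))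
      = {((0 : Fin n), ((0:Fin n), (1:Fin n))), ((1 : Fin n), ((0:Fin n), (1:Fin n)))} := by
    ext ⟨h, l1, l2⟩
    simp only [Finset.mem_filter, Finset.mem_univ, true_and, Finset.mem_insert,
      Finset.mem_singleton, Prod.mk.injEq, hX, hL, hl0]
    constructor
    · rintro ⟨ht, h1, h2⟩
      subst h1; subst h2
      simp only [typeOf] at ht
      split_ifs at ht with hA hB
      · rcases hB with hB | hB | hB
        · exact Or.inl ⟨hB, rfl, rfl⟩
        · exact Or.inr ⟨hB, rfl, rfl⟩
        · exact absurd hB h01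
    · rintro (⟨rfl, rfl, rfl⟩ | ⟨rfl, rfl, rfl⟩) <;>
        simp [typeOf, h01, h01.symm]
  have hmass1 : mass p (fun ω => (X ω, L ω)) (ISOSCELES, l₀) = 2 * c := by
    rw [hpdef, mass_const, hfilt1]
    rw [Finset.card_insert_of_notMem (by simp [Prod.ext_iff, h01]), Finset.card_singleton]
    norm_num
  -- mass of L at (0,1)
  have hfilt2 : Finset.univ.filter (fun ω : Fin n × Fin n × Fin n => L ω = l₀)
      = Finset.univ.map ⟨fun h : Fin n => (h, l₀), fun a b hab => by
          simpa [Prod.ext_iff] using hab⟩ := by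
    ext ⟨h, l⟩
    simp [hL, eq_comm, Prod.ext_iff, and_comm]
    exact ⟨fun hx => ⟨h, rfl, hx.1, hx.2⟩, fun ⟨_, _, h1, h2⟩ => ⟨h1, h2⟩⟩
  have hmass2 : mass p L l₀ = n * c := by
    rw [hpdef, mass_const, hfilt2, Finset.card_map]
    simp
  -- strict negativity of inner sum at l₀
  have hne : mass p (fun ω => (X ω, L ω)) (ISOSCELES, l₀) *
      Real.log (mass p (fun ω => (X ω, L ω)) (ISOSCELES, l₀) / mass p L l₀) < 0 := by
    rw [hmass1, hmass2]
    have hratio : (2 * c) / ((n:ℝ) * c) = 2 / (n:ℝ) := by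
      rw [mul_div_mul_right _ _ (ne_of_gt hcpos)]
    rw [hratio]
    have h2n : (2:ℝ) / (n:ℝ) < 1 := by
      rw [div_lt_one hnpos]
      have : (3:ℝ) ≤ (n:ℝ) := by exact_mod_cast hn
      linarith
    have hlog : Real.log (2 / (n:ℝ)) < 0 :=
      Real.log_neg (by positivity) h2n
    have : 0 < 2 * c := by positivity
    exact mul_neg_of_pos_of_neg this hlog
  -- assemble
  rw [condEntropy]
  rw [neg_pos]
  have inner_lt : ∑ x, mass p (fun ω => (X ω, L ω)) (x, l₀) *
      Real.log (mass p (fun ω => (X ω, L ω)) (x, l₀) / mass p L l₀) < 0 := by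
    have := Finset.sum_lt_sum (s := Finset.univ)
      (f := fun x => mass p (fun ω => (X ω, L ω)) (x, l₀) *
        Real.log (mass p (fun ω => (X ω, L ω)) (x, l₀) / mass p L l₀))
      (g := fun _ => (0:ℝ))
      (fun x _ => hterm l₀ x) ⟨ISOSCELES, Finset.mem_univ _, hne⟩
    simpa using this
  have := Finset.sum_lt_sum (s := Finset.univ)
    (f := fun l => ∑ x, mass p (fun ω => (X ω, L ω)) (x, l) *
      Real.log (mass p (fun ω => (X ω, L ω)) (x, l) / mass p L l))
    (g := fun _ => (0:ℝ))
    (fun l _ => Finset.sum_nonpos (fun x _ => hterm l x)) ⟨l₀, Finset.mem_univ _, inner_lt⟩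
  simpa using this
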